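/- Let G be a compact Hausdorff abelian topological group, h ∈ G, and let H be the closure in G of the subgroup generated by h, with m_H the normalized Haar probability measure on H. Let w : G → ℂ be continuous with w(g) ≠ 0 for all g ∈ G, and let T be the bounded operator on the Banach space C(G, ℂ) of continuous complex-valued functions on G with the sup norm defined by (Tf)(g) = w(g) f(hg). Then the spectral radius of T equals the supremum over t ∈ G of exp(∫_H log|w(t s)| dm_H(s)). -/

import Mathlib

open Filter Topology MeasureTheory

section Aux

variable {G : Type*} [TopologicalSpace G] [CommGroup G] [IsTopologicalGroup G]
    [CompactSpace G] [T2Space G]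

lemma aux_pow_apply (h : G) (w : C(G, ℂ)) (T : C(G, ℂ) →L[ℂ] C(G, ℂ))
    (hT : ∀ (f : C(G, ℂ)) (g : G), (T f) g = w g * f (h * g)) :
    ∀ (n : ℕ) (f : C(G, ℂ)) (g : G),
      ((T ^ n) f) g = (∏ k ∈ Finset.range n, w (h ^ k * g)) * f (h ^ n * g) := by
  intro n
  induction n with
  | zero => intro f g; simp
  | succ n ih =>
    intro f g
    rw [pow_succ, ContinuousLinearMap.mul_apply, ih (T f) g]
    rw [hT f (h ^ n * g), Finset.prod_range_succ]
    rw [show h * (h ^ n * g) = h ^ (n + 1) * g by rw [pow_succ]; rw [mul_comm (h^n) h, mul_assoc]]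
    ring

lemma aux_norm_pow (h : G) (w : C(G, ℂ)) (T : C(G, ℂ) →L[ℂ] C(G, ℂ))
    (hT : ∀ (f : C(G, ℂ)) (g : G), (T f) g = w g * f (h * g)) (n : ℕ) :
    ‖T ^ n‖ = ‖(T ^ n) 1‖ := by
  haveI : Nonempty G := ⟨1⟩
  refine le_antisymm ?_ ?_
  · refine ContinuousLinearMap.opNorm_le_bound _ (norm_nonneg _) (fun f => ?_)
    refine ContinuousMap.norm_le _ (mul_nonneg (norm_nonneg _) (norm_nonneg _)) |>.mpr (fun g => ?_)
    rw [aux_pow_apply h w T hT n f g]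
    calc ‖(∏ k ∈ Finset.range n, w (h ^ k * g)) * f (h ^ n * g)‖
        = ‖∏ k ∈ Finset.range n, w (h ^ k * g)‖ * ‖f (h ^ n * g)‖ := norm_mul _ _
      _ ≤ ‖((T ^ n) 1 : C(G, ℂ)) g‖ * ‖f‖ := by
          rw [aux_pow_apply h w T hT n 1 g]
          simp only [ContinuousMap.one_apply, mul_one]
          exact mul_le_mul_of_nonneg_left (f.norm_coe_le_norm _) (norm_nonneg _)
      _ ≤ ‖(T ^ n) 1‖ * ‖f‖ :=
          mul_le_mul_of_nonneg_right (ContinuousMap.norm_coe_le_norm _ _) (norm_nonneg _)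
  · calc ‖(T ^ n) 1‖ ≤ ‖T ^ n‖ * ‖(1 : C(G, ℂ))‖ := ContinuousLinearMap.le_opNorm _ _
      _ = ‖T ^ n‖ := by rw [norm_one, mul_one]

end Aux

section Aux2
set_option linter.unusedSectionVars false

variable {G : Type*} [TopologicalSpace G] [CommGroup G] [IsTopologicalGroup G]
    [CompactSpace G] [T2Space G]

/-- the continuous function `log ‖w ·‖` -/
noncomputable def auxPhi (w : C(G, ℂ)) (hw : ∀ g : G, w g ≠ 0) : C(G, ℝ) :=
  ⟨fun g => Real.log ‖w g‖, (w.continuous.norm).log (fun g => norm_ne_zero_iff.mpr (hw g))⟩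

/-- left translation of a continuous map -/
noncomputable def auxTr (a : G) (φ : C(G, ℝ)) : C(G, ℝ) :=
  φ.comp ⟨fun x => a * x, continuous_const.mul continuous_id⟩

@[simp] lemma auxTr_apply (a : G) (φ : C(G, ℝ)) (x : G) : auxTr a φ x = φ (a * x) := rfl

/-- Birkhoff sum as a continuous map -/
noncomputable def auxSn (h : G) (φ : C(G, ℝ)) (n : ℕ) : C(G, ℝ) :=
  ∑ k ∈ Finset.range n, auxTr (h ^ k) φ

@[simp] lemma auxSn_apply (h : G) (φ : C(G, ℝ)) (n : ℕ) (g : G) :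
    auxSn h φ n g = ∑ k ∈ Finset.range n, φ (h ^ k * g) := by
  simp [auxSn]

lemma aux_norm_pow_one (h : G) (w : C(G, ℂ)) (hw : ∀ g : G, w g ≠ 0)
    (T : C(G, ℂ) →L[ℂ] C(G, ℂ))
    (hT : ∀ (f : C(G, ℂ)) (g : G), (T f) g = w g * f (h * g)) (n : ℕ) :
    ‖(T ^ n) 1‖ = Real.exp (⨆ g : G, auxSn h (auxPhi w hw) n g) := by
  haveI : Nonempty G := ⟨1⟩
  have hval : ∀ g : G, ‖((T ^ n) 1 : C(G, ℂ)) g‖ = Real.exp (auxSn h (auxPhi w hw) n g) := by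
    intro g
    rw [aux_pow_apply h w T hT n 1 g]
    simp only [ContinuousMap.one_apply, mul_one, norm_prod, auxSn_apply]
    rw [Real.exp_sum]
    refine Finset.prod_congr rfl (fun k _ => ?_)
    exact (Real.exp_log (norm_pos_iff.mpr (hw _))).symm
  rw [ContinuousMap.norm_eq_iSup_norm]
  simp_rw [hval]
  have hbdd : BddAbove (Set.range fun g : G => auxSn h (auxPhi w hw) n g) :=
    (isCompact_range (auxSn h (auxPhi w hw) n).continuous).bddAbove
  exact (Real.exp_monotone.map_ciSup_of_continuousAt (Real.continuous_exp.continuousAt) hbdd).symm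

end Aux2

section Aux2
set_option linter.unusedSectionVars false

variable {G : Type*} [TopologicalSpace G] [CommGroup G] [IsTopologicalGroup G]
    [CompactSpace G] [T2Space G]

noncomputable def auxUn (h : G) (φ : C(G, ℝ)) (n : ℕ) : C(G, ℝ) :=
  (n : ℝ)⁻¹ • auxSn h φ n

@[simp] lemma auxUn_apply (h : G) (φ : C(G, ℝ)) (n : ℕ) (g : G) :
    auxUn h φ n g = (n : ℝ)⁻¹ * ∑ k ∈ Finset.range n, φ (h ^ k * g) := by
  simp [auxUn]

variable [MeasurableSpace G] [BorelSpace G]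

lemma aux_integrable (μ : Measure G) [IsProbabilityMeasure μ] {f : G → ℝ} (hf : Continuous f) :
    Integrable f μ := by
  refine hf.integrable_of_hasCompactSupport ?_
  exact IsCompact.of_isClosed_subset isCompact_univ (isClosed_tsupport f) (Set.subset_univ _)

/-- translation invariance of the integral -/
lemma aux_int_inv (h : G) (μ : Measure G) [IsProbabilityMeasure μ]
    (hμinv : ∀ g ∈ (Subgroup.zpowers h).topologicalClosure,
      Measure.map (fun s => g * s) μ = μ)
    (φ : C(G, ℝ)) (t : G) (k : ℕ) :
    ∫ s, φ (t * (h ^ k * s)) ∂μ = ∫ s, φ (t * s) ∂μ := by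
  have hmem : (h : G) ^ k ∈ (Subgroup.zpowers h).topologicalClosure :=
    pow_mem (Subgroup.le_topologicalClosure _ (Subgroup.mem_zpowers h)) k
  conv_rhs => rw [← hμinv _ hmem]
  rw [integral_map (by fun_prop) (Continuous.aestronglyMeasurable (by fun_prop))]

/-- the averaged integral of a Birkhoff average equals the plain averaged integral -/
lemma aux_int_un (h : G) (μ : Measure G) [IsProbabilityMeasure μ]
    (hμinv : ∀ g ∈ (Subgroup.zpowers h).topologicalClosure,
      Measure.map (fun s => g * s) μ = μ)
    (φ : C(G, ℝ)) (t : G) (n : ℕ) (hn : 0 < n) :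
    ∫ s, auxUn h φ n (t * s) ∂μ = ∫ s, φ (t * s) ∂μ := by
  simp only [auxUn_apply]
  rw [MeasureTheory.integral_const_mul, integral_finset_sum _ (fun k _ => aux_integrable μ (by fun_prop))]
  have : ∀ k ∈ Finset.range n, ∫ s, φ (h ^ k * (t * s)) ∂μ = ∫ s, φ (t * s) ∂μ := by
    intro k _
    have := aux_int_inv h μ hμinv φ t k
    simp_rw [show ∀ s, t * (h ^ k * s) = h ^ k * (t * s) by intro s; rw [← mul_assoc, ← mul_assoc, mul_comm t (h^k)]] at this
    exact this
  rw [Finset.sum_congr rfl this, Finset.sum_const, Finset.card_range, nsmul_eq_mul]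
  rw [← mul_assoc, inv_mul_cancel₀ (by exact_mod_cast hn.ne'), one_mul]



set_option maxHeartbeats 1000000 in
lemma aux_key (h : G) (μ : Measure G) [IsProbabilityMeasure μ]
    (hμH : μ ((((Subgroup.zpowers h).topologicalClosure : Subgroup G) : Set G))ᶜ = 0)
    (hμinv : ∀ g ∈ (Subgroup.zpowers h).topologicalClosure,
      Measure.map (fun s => g * s) μ = μ)
    (φ : C(G, ℝ)) :
    ∃ χ : C(G, ℝ), (∀ t, χ t = ∫ s, φ (t * s) ∂μ) ∧
      Tendsto (fun n => auxUn h φ n) atTop (𝓝 χ) := by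
  haveI : Nonempty G := ⟨1⟩
  -- the compact set containing all Birkhoff averages
  let Θ : C(G, C(G, ℝ)) := ContinuousMap.curry ⟨fun p => φ (p.1 * p.2), by fun_prop⟩
  have hΘ : ∀ a : G, Θ a = auxTr a φ := fun a => ContinuousMap.ext fun x => rfl
  set CC : Set C(G, ℝ) := closure (convexHull ℝ (Set.range Θ)) with hCCdef
  have hCC : IsCompact CC :=
    TotallyBounded.isCompact_of_isClosed
      ((totallyBounded_convexHull.mpr (isCompact_range Θ.continuous).totallyBounded).closure)
      isClosed_closure
  have hmem : ∀ n : ℕ, auxUn h φ (n + 1) ∈ CC := by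
    intro n
    apply subset_closure
    have heq : auxUn h φ (n + 1)
        = ∑ k ∈ Finset.range (n + 1), ((n + 1 : ℕ) : ℝ)⁻¹ • Θ (h ^ k) := by
      rw [auxUn, auxSn, Finset.smul_sum]
      exact Finset.sum_congr rfl fun k _ => by rw [hΘ]
    rw [heq]
    refine (convex_convexHull ℝ _).sum_mem (fun i _ => by positivity) ?_
      (fun i _ => subset_convexHull _ _ (Set.mem_range_self _))
    rw [Finset.sum_const, Finset.card_range, nsmul_eq_mul]
    rw [mul_inv_cancel₀ (by positivity)]
  -- characterization of limit points
  have claim : ∀ (χ : C(G, ℝ)) (m : ℕ → ℕ), Tendsto m atTop atTop →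
      Tendsto (fun j => auxUn h φ (m j)) atTop (𝓝 χ) →
      ∀ t, χ t = ∫ s, φ (t * s) ∂μ := by
    intro χ m hm hconv
    have hev : ∀ x : G, Tendsto (fun j => auxUn h φ (m j) x) atTop (𝓝 (χ x)) :=
      fun x => ((continuous_eval_const x).tendsto χ).comp hconv
    -- (a) invariance under h
    have hinv : ∀ t, χ (h * t) = χ t := by
      intro t
      have hd : ∀ n : ℕ, |auxUn h φ n (h * t) - auxUn h φ n t| ≤ 2 * ‖φ‖ / n := by
        intro n
        rcases Nat.eq_zero_or_pos n with hn | hn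
        · subst hn; simp
        have hsum : (∑ k ∈ Finset.range n, φ (h ^ k * (h * t)))
            = (∑ k ∈ Finset.range n, φ (h ^ k * t)) + φ (h ^ n * t) - φ (h ^ 0 * t) := by
          have h1 : ∀ k, h ^ k * (h * t) = h ^ (k + 1) * t := by
            intro k; rw [pow_succ, mul_assoc]
          simp_rw [h1]
          have := Finset.sum_range_succ' (fun k => φ (h ^ k * t)) n
          rw [Finset.sum_range_succ] at this
          linarith [this]
        have habs : ∀ x : G, |φ x| ≤ ‖φ‖ := fun x => by
          simpa [Real.norm_eq_abs] using φ.norm_coe_le_norm x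
        rw [auxUn_apply, auxUn_apply, hsum]
        rw [show (n : ℝ)⁻¹ * ((∑ k ∈ Finset.range n, φ (h ^ k * t)) + φ (h ^ n * t)
            - φ (h ^ 0 * t)) - (n : ℝ)⁻¹ * ∑ k ∈ Finset.range n, φ (h ^ k * t)
            = (n : ℝ)⁻¹ * (φ (h ^ n * t) - φ (h ^ 0 * t)) by ring]
        rw [abs_mul, abs_of_nonneg (by positivity : (0:ℝ) ≤ (n : ℝ)⁻¹), div_eq_inv_mul]
        refine mul_le_mul_of_nonneg_left ?_ (by positivity)
        calc |φ (h ^ n * t) - φ (h ^ 0 * t)| ≤ |φ (h ^ n * t)| + |φ (h ^ 0 * t)| := abs_sub _ _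
          _ ≤ ‖φ‖ + ‖φ‖ := add_le_add (habs _) (habs _)
          _ = 2 * ‖φ‖ := by ring
      have h1 : Tendsto (fun j => auxUn h φ (m j) (h * t) - auxUn h φ (m j) t) atTop
          (𝓝 (χ (h * t) - χ t)) := (hev (h * t)).sub (hev t)
      have h2 : Tendsto (fun j => auxUn h φ (m j) (h * t) - auxUn h φ (m j) t) atTop (𝓝 0) := by
        refine squeeze_zero_norm (a := fun j => 2 * ‖φ‖ / (m j : ℝ)) (fun j => ?_) ?_
        · simpa [Real.norm_eq_abs] using hd (m j)
        · exact (tendsto_const_div_atTop_nhds_zero_nat (2 * ‖φ‖)).comp hm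
      have := tendsto_nhds_unique h1 h2
      linarith [this]
    -- (b) invariance under the closure of the subgroup generated by h
    have hinv' : ∀ s ∈ (Subgroup.zpowers h).topologicalClosure, ∀ t, χ (s * t) = χ t := by
      set S : Subgroup G :=
        { carrier := {s | ∀ t, χ (s * t) = χ t}
          one_mem' := fun t => by rw [one_mul]
          mul_mem' := fun {a b} ha hb t => by rw [mul_assoc, ha, hb]
          inv_mem' := fun {a} ha t => by
            have h2 := ha (a⁻¹ * t)
            rw [← mul_assoc, mul_inv_cancel, one_mul] at h2
            exact h2.symm } with hS
      have hclosed : IsClosed (S : Set G) := by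
        have : (S : Set G) = ⋂ t, {s | χ (s * t) = χ t} := Set.setOf_forall _
        rw [this]
        exact isClosed_iInter fun t => isClosed_eq (by fun_prop) continuous_const
      have hhS : h ∈ S := hinv
      intro s hs
      exact Subgroup.topologicalClosure_minimal _ (Subgroup.zpowers_le.mpr hhS) hclosed hs
    -- (c) averaging χ over μ gives back χ
    have hPχ : ∀ t, ∫ s, χ (t * s) ∂μ = χ t := by
      intro t
      have haeH : ∀ᵐ s ∂μ, s ∈ (((Subgroup.zpowers h).topologicalClosure : Subgroup G) : Set G) := by
        rw [MeasureTheory.ae_iff]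
        exact measure_mono_null (fun s hs => hs) hμH
      have hae : (fun s => χ (t * s)) =ᵐ[μ] (fun _ => χ t) := by
        filter_upwards [haeH] with s hs
        rw [mul_comm t s, hinv' s hs t]
      rw [integral_congr_ae hae, integral_const, probReal_univ]
      simp
    -- (d)+(e): identify χ with the integral average of φ
    intro t
    have h1 : Tendsto (fun j => ∫ s, auxUn h φ (m j) (t * s) ∂μ) atTop
        (𝓝 (∫ s, χ (t * s) ∂μ)) := by
      rw [tendsto_iff_dist_tendsto_zero]
      refine squeeze_zero_norm (fun j => ?_)
        ((tendsto_iff_dist_tendsto_zero.mp hconv))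
      rw [Real.dist_eq, Real.norm_eq_abs, abs_abs,
        ← integral_sub (aux_integrable μ (by fun_prop)) (aux_integrable μ (by fun_prop))]
      have := norm_integral_le_of_norm_le_const (μ := μ)
        (f := fun s => auxUn h φ (m j) (t * s) - χ (t * s)) (C := dist (auxUn h φ (m j)) χ)
        (Eventually.of_forall fun s => by
          rw [Real.norm_eq_abs, ← Real.dist_eq]
          exact ContinuousMap.dist_apply_le_dist _)
      simpa [measure_univ] using this
    have h2 : Tendsto (fun j => ∫ s, auxUn h φ (m j) (t * s) ∂μ) atTop
        (𝓝 (∫ s, φ (t * s) ∂μ)) := by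
      refine Tendsto.congr' ?_ tendsto_const_nhds
      filter_upwards [hm.eventually_ge_atTop 1] with j hj
      exact (aux_int_un h μ hμinv φ t (m j) hj).symm
    rw [← hPχ t]
    exact tendsto_nhds_unique h1 h2
  -- extract a limit point and show convergence
  obtain ⟨χ₀, _, σ, hσ, hσtend⟩ := hCC.tendsto_subseq hmem
  have hσ1 : Tendsto (fun j => σ j + 1) atTop atTop :=
    (tendsto_add_atTop_nat 1).comp hσ.tendsto_atTop
  have hχ₀ : ∀ t, χ₀ t = ∫ s, φ (t * s) ∂μ := claim χ₀ (fun j => σ j + 1) hσ1 hσtend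
  have hmain : Tendsto (fun n => auxUn h φ (n + 1)) atTop (𝓝 χ₀) := by
    refine tendsto_of_subseq_tendsto (fun ns hns => ?_)
    obtain ⟨χ₁, _, σ', hσ', hσ'tend⟩ := hCC.tendsto_subseq (fun j => hmem (ns j))
    refine ⟨σ', ?_⟩
    have hm' : Tendsto (fun j => ns (σ' j) + 1) atTop atTop :=
      (tendsto_add_atTop_nat 1).comp (hns.comp hσ'.tendsto_atTop)
    have hχ₁ : ∀ t, χ₁ t = ∫ s, φ (t * s) ∂μ := claim χ₁ (fun j => ns (σ' j) + 1) hm' hσ'tend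
    have : χ₁ = χ₀ := ContinuousMap.ext fun t => by rw [hχ₁ t, hχ₀ t]
    rwa [this] at hσ'tend
  exact ⟨χ₀, hχ₀, (tendsto_add_atTop_iff_nat 1).mp hmain⟩

end Aux2

section Aux3
set_option linter.unusedSectionVars false

variable {G : Type*} [TopologicalSpace G] [CommGroup G] [IsTopologicalGroup G]
    [CompactSpace G] [T2Space G]

lemma aux_sub_sup_le [Nonempty G] (f g : C(G, ℝ)) : (⨆ x, f x) - (⨆ x, g x) ≤ dist f g := by
  have hbg := (isCompact_range g.continuous).bddAbove
  rw [sub_le_iff_le_add]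
  refine ciSup_le fun x => ?_
  have h1 : f x - g x ≤ dist f g := by
    have hd := ContinuousMap.dist_apply_le_dist (f := f) (g := g) x
    rw [Real.dist_eq] at hd
    exact (le_abs_self _).trans hd
  have h2 : g x ≤ ⨆ y, g y := le_ciSup hbg x
  linarith

lemma aux_sup_dist [Nonempty G] (f g : C(G, ℝ)) :
    |(⨆ x, f x) - ⨆ x, g x| ≤ dist f g := by
  rw [abs_sub_le_iff]
  exact ⟨aux_sub_sup_le f g, by rw [dist_comm]; exact aux_sub_sup_le g f⟩

end Aux3

theorem statement_11 {G : Type*} [TopologicalSpace G] [CommGroup G] [IsTopologicalGroup G]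
    [CompactSpace G] [T2Space G] [MeasurableSpace G] [BorelSpace G]
    (h : G) (μ : Measure G) [IsProbabilityMeasure μ]
    -- μ is the Haar probability measure of the closed subgroup H generated by h,
    -- viewed as a measure on G: it is concentrated on H and invariant under
    -- translation by elements of H
    (hμH : μ ((((Subgroup.zpowers h).topologicalClosure : Subgroup G) : Set G))ᶜ = 0)
    (hμinv : ∀ g ∈ (Subgroup.zpowers h).topologicalClosure,
      Measure.map (fun s => g * s) μ = μ)
    (w : C(G, ℂ)) (hw : ∀ g : G, w g ≠ 0)
    (T : C(G, ℂ) →L[ℂ] C(G, ℂ))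
    (hT : ∀ (f : C(G, ℂ)) (g : G), (T f) g = w g * f (h * g)) :
    (spectralRadius ℂ T).toReal = ⨆ t : G, Real.exp (∫ s, Real.log ‖w (t * s)‖ ∂μ) := by
  haveI : Nonempty G := ⟨1⟩
  set φ : C(G, ℝ) := auxPhi w hw with hφdef
  obtain ⟨χ, hχ, htend⟩ := aux_key h μ hμH hμinv φ
  -- convergence of the suprema
  have hsup : Tendsto (fun n => ⨆ g' : G, auxUn h φ n g') atTop (𝓝 (⨆ g' : G, χ g')) := by
    rw [tendsto_iff_dist_tendsto_zero]
    refine squeeze_zero (fun n => dist_nonneg) (fun n => ?_)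
      (tendsto_iff_dist_tendsto_zero.mp htend)
    rw [Real.dist_eq]
    exact aux_sup_dist _ _
  -- Gelfand's formula
  have hG := spectrum.pow_norm_pow_one_div_tendsto_nhds_spectralRadius T
  have hEq : ∀ᶠ n : ℕ in atTop, ENNReal.ofReal (‖T ^ n‖ ^ (1 / (n : ℝ)))
      = ENNReal.ofReal (Real.exp (⨆ g' : G, auxUn h φ n g')) := by
    filter_upwards [eventually_ge_atTop 1] with n hn
    congr 1
    rw [aux_norm_pow h w T hT n, aux_norm_pow_one h w hw T hT n]
    rw [Real.rpow_def_of_pos (Real.exp_pos _), Real.log_exp]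
    have hbdd : BddAbove (Set.range fun g' : G => auxSn h φ n g') :=
      (isCompact_range (auxSn h φ n).continuous).bddAbove
    have hmono : Monotone (fun x : ℝ => (n : ℝ)⁻¹ * x) :=
      fun a b hab => mul_le_mul_of_nonneg_left hab (by positivity)
    have hmap := hmono.map_ciSup_of_continuousAt
      ((continuous_const.mul continuous_id).continuousAt) hbdd
    simp only [Pi.mul_apply, id_eq] at hmap
    rw [mul_one_div, div_eq_inv_mul, hmap]
    exact congrArg Real.exp (iSup_congr fun g' => by simp [auxUn])
  have hG2 : Tendsto (fun n : ℕ => ENNReal.ofReal (‖T ^ n‖ ^ (1 / (n : ℝ)))) atTop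
      (𝓝 (ENNReal.ofReal (Real.exp (⨆ g' : G, χ g')))) := by
    refine Tendsto.congr' (by filter_upwards [hEq] with n hn; exact hn.symm) ?_
    exact (ENNReal.continuous_ofReal.tendsto _).comp ((Real.continuous_exp.tendsto _).comp hsup)
  have hspec : spectralRadius ℂ T = ENNReal.ofReal (Real.exp (⨆ g' : G, χ g')) :=
    tendsto_nhds_unique hG hG2
  rw [hspec, ENNReal.toReal_ofReal (Real.exp_nonneg _)]
  have hRHS : (⨆ t : G, Real.exp (∫ s, Real.log ‖w (t * s)‖ ∂μ))
      = ⨆ t : G, Real.exp (χ t) := by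
    refine iSup_congr fun t => ?_
    congr 1
    exact (hχ t).symm
  rw [hRHS]
  have hbχ : BddAbove (Set.range fun t : G => χ t) :=
    (isCompact_range χ.continuous).bddAbove
  exact Real.exp_monotone.map_ciSup_of_continuousAt Real.continuous_exp.continuousAt hbχ
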